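/- Let K be an A-field of A-characteristic zero and let Υ be a triangular t-module of dimension n over K whose diagonal Drinfeld modules ψ_1,…,ψ_n are pairwise non-isogenous, i.e. Hom_τ(ψ_i, ψ_j) = 0 for all i ≠ j. Then the endomorphism algebra End_τ(Υ) = { F ∈ Mat_n(K{τ}) : F·Υ_t = Υ_t·F } is commutative. -/

import Mathlib

open Polynomial Matrix Finset

noncomputable section

/-- Twisted ("skew") multiplication of polynomials in `τ`, determined by the rule
`τ · c = c^q · τ`:  `(Σᵢ aᵢτ^i) · (Σⱼ bⱼτ^j) = Σ_{i,j} aᵢ bⱼ^(q^i) τ^(i+j)`. -/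
def twMul {K : Type*} [Field K] (q : ℕ) (f g : Polynomial K) : Polynomial K :=
  f.sum fun i a => g.sum fun j b => Polynomial.C (a * b ^ q ^ i) * Polynomial.X ^ (i + j)

/-- Twisted multiplication of matrices over the twisted polynomial ring `K{τ}`. -/
def twMatMul {K : Type*} [Field K] (q : ℕ) {α β γ : Type*} [Fintype β]
    (A : Matrix α β (Polynomial K)) (B : Matrix β γ (Polynomial K)) :
    Matrix α γ (Polynomial K) :=
  Matrix.of fun i k => ∑ j, twMul q (A i j) (B j k)

/-- `ψ` is (the value at `t` of) a Drinfeld module of rank `r` over the `A`-field `(K, θ)`. -/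
def IsDrinfeld {K : Type*} [Field K] (θ : K) (r : ℕ) (ψ : Polynomial K) : Prop :=
  1 ≤ r ∧ ψ.coeff 0 = θ ∧ ψ.natDegree = r ∧ ψ.coeff r ≠ 0

/-- `Υ` is (the value at `t` of) a triangular t-module of dimension `n` with diagonal
Drinfeld modules `ψ 0 = ψ₁, …, ψ (n-1) = ψₙ` of ranks `r 0, …, r (n-1)`:  `Υ` is lower
triangular and its `(k,k)` diagonal entry is `ψ k.rev` (so `ψₙ` is top-left and
`ψ₁` is bottom-right). -/
def IsTriangular {K : Type*} [Field K] (θ : K) {n : ℕ}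
    (Υ : Matrix (Fin n) (Fin n) (Polynomial K))
    (ψ : Fin n → Polynomial K) (r : Fin n → ℕ) : Prop :=
  (∀ i j : Fin n, i < j → Υ i j = 0) ∧
  (∀ k : Fin n, Υ k k = ψ k.rev) ∧
  (∀ i : Fin n, IsDrinfeld θ (r i) (ψ i))


section TwistedLemmas
variable {K : Type*} [Field K] {q : ℕ}


lemma twMul_monomial (hq0 : 0 < q) (i j : ℕ) (a b : K) :
    twMul q ((monomial i) a) ((monomial j) b) = monomial (i + j) (a * b ^ q ^ i) := by
  unfold twMul
  rw [Polynomial.sum_monomial_index, Polynomial.sum_monomial_index]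
  · rw [Polynomial.C_mul_X_pow_eq_monomial]
  · simp [zero_pow (pow_ne_zero i hq0.ne')]
  · simp [Polynomial.sum]

lemma twMul_zero_left (g : Polynomial K) : twMul q 0 g = 0 := Polynomial.sum_zero_index _

lemma twMul_zero_right (f : Polynomial K) : twMul q f 0 = 0 := by
  unfold twMul; simp [Polynomial.sum_zero_index, Polynomial.sum]

lemma twMul_add_left (f f' g : Polynomial K) :
    twMul q (f + f') g = twMul q f g + twMul q f' g := by
  unfold twMul
  rw [Polynomial.sum_add_index]
  · intro i; simp [Polynomial.sum]
  · intro i a a'; rw [← Polynomial.sum_add]; congr 1; ext j b; rw [← add_mul, ← C_add, ← add_mul]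

lemma twMul_add_right (hq0 : 0 < q)
    (hfr : ∀ (a b : K) (i : ℕ), (a + b) ^ q ^ i = a ^ q ^ i + b ^ q ^ i)
    (f g g' : Polynomial K) :
    twMul q f (g + g') = twMul q f g + twMul q f g' := by
  unfold twMul
  rw [← Polynomial.sum_add]
  congr 1; ext i a
  rw [Polynomial.sum_add_index]
  · intro j; simp [zero_pow (pow_ne_zero i hq0.ne')]
  · intro j b b'; rw [hfr, mul_add, C_add, add_mul]



lemma coeff_twMul (hq0 : 0 < q)
    (hfr : ∀ (a b : K) (i : ℕ), (a + b) ^ q ^ i = a ^ q ^ i + b ^ q ^ i)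
    (f g : Polynomial K) (m : ℕ) :
    (twMul q f g).coeff m = ∑ x ∈ antidiagonal m, f.coeff x.1 * g.coeff x.2 ^ q ^ x.1 := by
  induction f using Polynomial.induction_on' with
  | add f f' hf hf' =>
    simp only [twMul_add_left, coeff_add, hf, hf', ← Finset.sum_add_distrib, add_mul]
  | monomial k a =>
    induction g using Polynomial.induction_on' with
    | add g g' hg hg' =>
      rw [twMul_add_right hq0 hfr, coeff_add, hg, hg', ← Finset.sum_add_distrib]
      refine Finset.sum_congr rfl fun x _ => ?_
      rw [coeff_add, hfr, mul_add]
    | monomial l b =>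
      rw [twMul_monomial hq0, coeff_monomial]
      by_cases h : k + l = m
      · rw [Finset.sum_eq_single (k, l)]
        · simp [coeff_monomial, if_pos h]
        · rintro ⟨x1, x2⟩ hx hne
          rw [Finset.HasAntidiagonal.mem_antidiagonal] at hx
          simp only [coeff_monomial]
          rcases eq_or_ne x1 k with rfl | hk
          · have h2 : ¬ (l = x2) := by
              intro hl; exact hne (by simp [hl])
            rw [if_neg h2, zero_pow (pow_ne_zero _ hq0.ne'), mul_zero]
          · rw [if_neg (Ne.symm hk), zero_mul]
        · simp [Finset.HasAntidiagonal.mem_antidiagonal, h]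
      · rw [if_neg h]
        refine (Finset.sum_eq_zero fun x hx => ?_).symm
        rw [Finset.HasAntidiagonal.mem_antidiagonal] at hx
        simp only [coeff_monomial]
        rcases eq_or_ne x.1 k with h1 | h1
        · have h2 : ¬ (l = x.2) := by omega
          rw [if_neg h2, zero_pow (pow_ne_zero _ hq0.ne'), mul_zero]
        · rw [if_neg (Ne.symm h1), zero_mul]

lemma coeff_twMul_zero (hq0 : 0 < q)
    (hfr : ∀ (a b : K) (i : ℕ), (a + b) ^ q ^ i = a ^ q ^ i + b ^ q ^ i)
    (f g : Polynomial K) :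
    (twMul q f g).coeff 0 = f.coeff 0 * g.coeff 0 := by
  rw [coeff_twMul hq0 hfr]
  simp

lemma twMul_assoc (hq0 : 0 < q)
    (hfr : ∀ (a b : K) (i : ℕ), (a + b) ^ q ^ i = a ^ q ^ i + b ^ q ^ i)
    (f g h : Polynomial K) :
    twMul q (twMul q f g) h = twMul q f (twMul q g h) := by
  induction f using Polynomial.induction_on' with
  | add f f' hf hf' => rw [twMul_add_left, twMul_add_left, twMul_add_left, hf, hf']
  | monomial i a =>
    induction g using Polynomial.induction_on' with
    | add g g' hg hg' =>
      rw [twMul_add_right hq0 hfr, twMul_add_left, twMul_add_left,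
        twMul_add_right hq0 hfr, hg, hg']
    | monomial j b =>
      induction h using Polynomial.induction_on' with
      | add h h' hh hh' =>
        rw [twMul_add_right hq0 hfr, twMul_add_right hq0 hfr,
          twMul_add_right hq0 hfr, hh, hh']
      | monomial k c =>
        rw [twMul_monomial hq0, twMul_monomial hq0, twMul_monomial hq0,
          twMul_monomial hq0, add_assoc]
        congr 1
        rw [mul_pow, ← pow_mul, ← pow_add, add_comm j i, mul_assoc]


def twMulLeftHom (q : ℕ) (g : Polynomial K) : Polynomial K →+ Polynomial K :=
  AddMonoidHom.mk' (fun f => twMul q f g) fun f f' => twMul_add_left f f' g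

/-- `g ↦ twMul q f g` as an additive monoid hom. -/
def twMulRightHom (hq0 : 0 < q)
    (hfr : ∀ (a b : K) (i : ℕ), (a + b) ^ q ^ i = a ^ q ^ i + b ^ q ^ i)
    (f : Polynomial K) : Polynomial K →+ Polynomial K :=
  AddMonoidHom.mk' (fun g => twMul q f g) fun g g' => twMul_add_right hq0 hfr f g g'

lemma twMul_sum_left {ι : Type*} (s : Finset ι) (f : ι → Polynomial K) (g : Polynomial K) :
    twMul q (∑ j ∈ s, f j) g = ∑ j ∈ s, twMul q (f j) g :=
  map_sum (twMulLeftHom q g) f s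

lemma twMul_sum_right (hq0 : 0 < q)
    (hfr : ∀ (a b : K) (i : ℕ), (a + b) ^ q ^ i = a ^ q ^ i + b ^ q ^ i)
    {ι : Type*} (s : Finset ι) (f : Polynomial K) (g : ι → Polynomial K) :
    twMul q f (∑ j ∈ s, g j) = ∑ j ∈ s, twMul q f (g j) :=
  map_sum (twMulRightHom hq0 hfr f) g s

lemma twMul_sub_left (f f' g : Polynomial K) :
    twMul q (f - f') g = twMul q f g - twMul q f' g :=
  map_sub (twMulLeftHom q g) f f'

lemma twMul_sub_right (hq0 : 0 < q)
    (hfr : ∀ (a b : K) (i : ℕ), (a + b) ^ q ^ i = a ^ q ^ i + b ^ q ^ i)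
    (f g g' : Polynomial K) :
    twMul q f (g - g') = twMul q f g - twMul q f g' :=
  map_sub (twMulRightHom hq0 hfr f) g g'

lemma twMatMul_apply {α β γ : Type*} [Fintype β]
    (A : Matrix α β (Polynomial K)) (B : Matrix β γ (Polynomial K)) (i : α) (k : γ) :
    twMatMul q A B i k = ∑ j, twMul q (A i j) (B j k) := rfl

lemma twMatMul_assoc (hq0 : 0 < q)
    (hfr : ∀ (a b : K) (i : ℕ), (a + b) ^ q ^ i = a ^ q ^ i + b ^ q ^ i)
    {n : ℕ} (A B C : Matrix (Fin n) (Fin n) (Polynomial K)) :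
    twMatMul q (twMatMul q A B) C = twMatMul q A (twMatMul q B C) := by
  ext i l
  simp only [twMatMul_apply, twMul_sum_left, twMul_sum_right hq0 hfr,
    twMul_assoc hq0 hfr]
  rw [Finset.sum_comm]

lemma twMatMul_sub_left {n : ℕ} (A B C : Matrix (Fin n) (Fin n) (Polynomial K)) :
    twMatMul q (A - B) C = twMatMul q A C - twMatMul q B C := by
  ext i l
  simp only [twMatMul_apply, Matrix.sub_apply, twMul_sub_left, Finset.sum_sub_distrib]

lemma twMatMul_sub_right (hq0 : 0 < q)
    (hfr : ∀ (a b : K) (i : ℕ), (a + b) ^ q ^ i = a ^ q ^ i + b ^ q ^ i)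
    {n : ℕ} (A B C : Matrix (Fin n) (Fin n) (Polynomial K)) :
    twMatMul q A (B - C) = twMatMul q A B - twMatMul q A C := by
  ext i l
  simp only [twMatMul_apply, Matrix.sub_apply, twMul_sub_right hq0 hfr,
    Finset.sum_sub_distrib]

/-- A twisted polynomial with zero constant term commuting with a Drinfeld module
in generic characteristic is zero. -/
lemma eq_zero_of_twMul_comm (p s : ℕ) [Fact p.Prime] [Algebra (GaloisField p s) K]
    (hq2 : 2 ≤ q)
    (hfr : ∀ (a b : K) (i : ℕ), (a + b) ^ q ^ i = a ^ q ^ i + b ^ q ^ i)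
    {θ : K} (hθ : Transcendental (GaloisField p s) θ)
    {ψ u : Polynomial K} (hψ0 : ψ.coeff 0 = θ)
    (hcomm : twMul q u ψ = twMul q ψ u) (hu0 : u.coeff 0 = 0) : u = 0 := by
  have hq0 : 0 < q := by omega
  by_contra hu
  set m := u.natTrailingDegree with hm
  have hum : u.coeff m ≠ 0 := by
    rw [hm, ← Polynomial.trailingCoeff]
    exact Polynomial.trailingCoeff_nonzero_iff_nonzero.mpr hu
  have hmpos : 0 < m := by
    rcases Nat.eq_zero_or_pos m with h | h
    · exact absurd (h ▸ hu0) (h ▸ hum)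
    · exact h
  have hlt : ∀ i < m, u.coeff i = 0 := fun i hi =>
    Polynomial.coeff_eq_zero_of_lt_natTrailingDegree hi
  have hc := congrArg (fun P => Polynomial.coeff P m) hcomm
  simp only [coeff_twMul hq0 hfr] at hc
  have hL : ∑ x ∈ antidiagonal m, u.coeff x.1 * ψ.coeff x.2 ^ q ^ x.1
      = u.coeff m * θ ^ q ^ m := by
    rw [Finset.sum_eq_single (m, 0)]
    · rw [hψ0]
    · rintro ⟨x1, x2⟩ hx hne
      rw [Finset.HasAntidiagonal.mem_antidiagonal] at hx
      have hx1 : x1 < m := by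
        rcases Nat.lt_or_ge x1 m with h | h
        · exact h
        · have h1 : x1 = m := by omega
          have h2 : x2 = 0 := by omega
          subst h1; subst h2; exact absurd rfl hne
      rw [hlt _ hx1, zero_mul]
    · simp [Finset.HasAntidiagonal.mem_antidiagonal]
  have hR : ∑ x ∈ antidiagonal m, ψ.coeff x.1 * u.coeff x.2 ^ q ^ x.1
      = θ * u.coeff m := by
    rw [Finset.sum_eq_single (0, m)]
    · rw [hψ0, pow_zero, pow_one]
    · rintro ⟨x1, x2⟩ hx hne
      rw [Finset.HasAntidiagonal.mem_antidiagonal] at hx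
      have hx2 : x2 < m := by
        rcases Nat.lt_or_ge x2 m with h | h
        · exact h
        · have h1 : x1 = 0 := by omega
          have h2 : x2 = m := by omega
          subst h1; subst h2; exact absurd rfl hne
      rw [hlt _ hx2, zero_pow (pow_ne_zero _ hq0.ne'), mul_zero]
    · simp [Finset.HasAntidiagonal.mem_antidiagonal]
  rw [hL, hR] at hc
  have hθm : θ ^ q ^ m = θ := mul_left_cancel₀ hum (hc.trans (mul_comm θ _))
  apply hθ
  refine ⟨X ^ q ^ m - X, ?_, ?_⟩
  · intro h
    have hco : ((X : (GaloisField p s)[X]) ^ q ^ m - X).coeff (q ^ m) = (0 : (GaloisField p s)[X]).coeff (q ^ m) := by rw [h]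
    have hne1 : q ^ m ≠ 1 := by
      have : 2 ^ 1 ≤ q ^ m := Nat.pow_le_pow_left hq2 m |>.trans' (by
        exact Nat.pow_le_pow_right (by omega) hmpos)
      omega
    simp only [Polynomial.coeff_sub, Polynomial.coeff_X_pow, Polynomial.coeff_X,
      if_pos rfl, if_neg (Ne.symm hne1), sub_zero, Polynomial.coeff_zero] at hco
    exact one_ne_zero hco
  · simp [map_sub, aeval_X_pow, hθm]

/-- Any endomorphism of a triangular t-module with pairwise non-isogenous diagonal is
lower triangular. -/
lemma upper_zero_of_centralizes {n : ℕ}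
    {Υ : Matrix (Fin n) (Fin n) (Polynomial K)} {ψ : Fin n → Polynomial K}
    (hlow : ∀ i j : Fin n, i < j → Υ i j = 0)
    (hdiag : ∀ k : Fin n, Υ k k = ψ k.rev)
    (hnoniso : ∀ i j : Fin n, i ≠ j →
      ∀ u : Polynomial K, twMul q u (ψ i) = twMul q (ψ j) u → u = 0)
    {F : Matrix (Fin n) (Fin n) (Polynomial K)}
    (hF : twMatMul q F Υ = twMatMul q Υ F) :
    ∀ i j : Fin n, i < j → F i j = 0 := by
  suffices h : ∀ d, ∀ i j : Fin n, i < j → n - ((j : ℕ) - (i : ℕ)) ≤ d → F i j = 0 by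
    intro i j hij
    exact h n i j hij (Nat.sub_le _ _)
  intro d
  induction d with
  | zero =>
    intro i j hij hle
    have hj := j.isLt
    have hij' : (i : ℕ) < (j : ℕ) := hij
    omega
  | succ d ih =>
    intro i j hij hle
    have hij' : (i : ℕ) < (j : ℕ) := hij
    have hjlt := j.isLt
    have he : twMatMul q F Υ i j = twMatMul q Υ F i j := by rw [hF]
    rw [twMatMul_apply, twMatMul_apply] at he
    have hL : ∑ k, twMul q (F i k) (Υ k j) = twMul q (F i j) (Υ j j) := by
      apply Finset.sum_eq_single j
      · intro k _ hkj
        rcases lt_or_gt_of_ne hkj with h | h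
        · rw [hlow k j h, twMul_zero_right]
        · have hjk : (j : ℕ) < (k : ℕ) := h
          have hklt := k.isLt
          have : F i k = 0 := ih i k (hij.trans h) (by omega)
          rw [this, twMul_zero_left]
      · intro hj; exact absurd (Finset.mem_univ j) hj
    have hR : ∑ k, twMul q (Υ i k) (F k j) = twMul q (Υ i i) (F i j) := by
      apply Finset.sum_eq_single i
      · intro k _ hki
        rcases lt_or_gt_of_ne hki with h | h
        · have hki' : (k : ℕ) < (i : ℕ) := h
          have : F k j = 0 := ih k j (h.trans hij) (by omega)
          rw [this, twMul_zero_right]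
        · rw [hlow i k h, twMul_zero_left]
      · intro hi; exact absurd (Finset.mem_univ i) hi
    rw [hL, hR, hdiag i, hdiag j] at he
    exact hnoniso j.rev i.rev (fun hh => hij.ne' (Fin.rev_inj.mp hh)) (F i j) he

/-- A centralizing matrix whose diagonal constant terms vanish is zero. -/
lemma eq_zero_of_centralizes (p s : ℕ) [Fact p.Prime] [Algebra (GaloisField p s) K]
    (hq2 : 2 ≤ q)
    (hfr : ∀ (a b : K) (i : ℕ), (a + b) ^ q ^ i = a ^ q ^ i + b ^ q ^ i)
    {θ : K} (hθ : Transcendental (GaloisField p s) θ) {n : ℕ}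
    {Υ : Matrix (Fin n) (Fin n) (Polynomial K)} {ψ : Fin n → Polynomial K}
    (hlow : ∀ i j : Fin n, i < j → Υ i j = 0)
    (hdiag : ∀ k : Fin n, Υ k k = ψ k.rev)
    (hψ0 : ∀ i, (ψ i).coeff 0 = θ)
    (hnoniso : ∀ i j : Fin n, i ≠ j →
      ∀ u : Polynomial K, twMul q u (ψ i) = twMul q (ψ j) u → u = 0)
    {F : Matrix (Fin n) (Fin n) (Polynomial K)}
    (hF : twMatMul q F Υ = twMatMul q Υ F)
    (h00 : ∀ k : Fin n, (F k k).coeff 0 = 0) : F = 0 := by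
  have hupper := upper_zero_of_centralizes hlow hdiag hnoniso hF
  have hdiag0 : ∀ k : Fin n, F k k = 0 := by
    intro k
    have he : twMatMul q F Υ k k = twMatMul q Υ F k k := by rw [hF]
    rw [twMatMul_apply, twMatMul_apply] at he
    have hL : ∑ j, twMul q (F k j) (Υ j k) = twMul q (F k k) (Υ k k) := by
      apply Finset.sum_eq_single k
      · intro j _ hjk
        rcases lt_or_gt_of_ne hjk with h | h
        · rw [hlow j k h, twMul_zero_right]
        · rw [hupper k j h, twMul_zero_left]
      · intro hk; exact absurd (Finset.mem_univ k) hk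
    have hR : ∑ j, twMul q (Υ k j) (F j k) = twMul q (Υ k k) (F k k) := by
      apply Finset.sum_eq_single k
      · intro j _ hjk
        rcases lt_or_gt_of_ne hjk with h | h
        · rw [hupper j k h, twMul_zero_right]
        · rw [hlow k j h, twMul_zero_left]
      · intro hk; exact absurd (Finset.mem_univ k) hk
    rw [hL, hR, hdiag k] at he
    exact eq_zero_of_twMul_comm p s hq2 hfr hθ (hψ0 k.rev) he (h00 k)
  suffices h : ∀ d, ∀ i j : Fin n, (i : ℕ) - (j : ℕ) ≤ d → F i j = 0 by
    refine Matrix.ext fun i j => ?_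
    rw [Matrix.zero_apply]
    exact h n i j (by have := i.isLt; omega)
  intro d
  induction d with
  | zero =>
    intro i j hle
    rcases lt_trichotomy i j with h | h | h
    · exact hupper i j h
    · exact h ▸ hdiag0 i
    · have : (j : ℕ) < (i : ℕ) := h
      omega
  | succ d ih =>
    intro i j hle
    rcases lt_trichotomy i j with h | h | h
    · exact hupper i j h
    · exact h ▸ hdiag0 i
    · have hji : (j : ℕ) < (i : ℕ) := h
      by_cases hd : (i : ℕ) - (j : ℕ) ≤ d
      · exact ih i j hd
      have he : twMatMul q F Υ i j = twMatMul q Υ F i j := by rw [hF]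
      rw [twMatMul_apply, twMatMul_apply] at he
      have hL : ∑ k, twMul q (F i k) (Υ k j) = twMul q (F i j) (Υ j j) := by
        apply Finset.sum_eq_single j
        · intro k _ hkj
          rcases lt_or_gt_of_ne hkj with hh | hh
          · rw [hlow k j hh, twMul_zero_right]
          · have hjk : (j : ℕ) < (k : ℕ) := hh
            have : F i k = 0 := ih i k (by omega)
            rw [this, twMul_zero_left]
        · intro hj; exact absurd (Finset.mem_univ j) hj
      have hR : ∑ k, twMul q (Υ i k) (F k j) = twMul q (Υ i i) (F i j) := by
        apply Finset.sum_eq_single i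
        · intro k _ hki
          rcases lt_or_gt_of_ne hki with hh | hh
          · have hki' : (k : ℕ) < (i : ℕ) := hh
            have : F k j = 0 := ih k j (by omega)
            rw [this, twMul_zero_right]
          · rw [hlow i k hh, twMul_zero_left]
        · intro hi; exact absurd (Finset.mem_univ i) hi
      rw [hL, hR, hdiag i, hdiag j] at he
      exact hnoniso j.rev i.rev (fun hh => h.ne' (Fin.rev_inj.mp hh).symm) (F i j) he


end TwistedLemmas

/-- commutativity of the endomorphism algebra.
If `K` has `A`-characteristic zero and the diagonal Drinfeld modules of the triangular
t-module `Υ` are pairwise non-isogenous (`Hom_τ(ψ_i,ψ_j) = 0` for `i ≠ j`), then the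
endomorphism algebra `End_τ(Υ)` is commutative. -/
theorem endomorphism_algebra_commutative
    {K : Type*} [Field K] (p s q : ℕ) [Fact p.Prime] (hs : 0 < s) (hq : q = p ^ s)
    [Algebra (GaloisField p s) K] (θ : K)
    (hθ : Transcendental (GaloisField p s) θ) {n : ℕ}
    (Υ : Matrix (Fin n) (Fin n) (Polynomial K))
    (ψ : Fin n → Polynomial K) (r : Fin n → ℕ)
    (hΥ : IsTriangular θ Υ ψ r)
    (hnoniso : ∀ i j : Fin n, i ≠ j →
      ∀ u : Polynomial K, twMul q u (ψ i) = twMul q (ψ j) u → u = 0) :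
    ∀ F G : Matrix (Fin n) (Fin n) (Polynomial K),
      twMatMul q F Υ = twMatMul q Υ F →
      twMatMul q G Υ = twMatMul q Υ G →
      twMatMul q F G = twMatMul q G F := by
  intro F G hF hG
  obtain ⟨hlow, hdiag, hdrin⟩ := hΥ
  haveI : CharP K p := charP_of_injective_algebraMap (algebraMap (GaloisField p s) K).injective p
  have hp2 : 2 ≤ p := (Fact.out : p.Prime).two_le
  have hq2 : 2 ≤ q := by
    have h1 : p ^ 1 ≤ p ^ s := Nat.pow_le_pow_right (by omega) hs
    rw [pow_one] at h1
    omega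
  have hq0 : 0 < q := by omega
  have hfr : ∀ (a b : K) (i : ℕ), (a + b) ^ q ^ i = a ^ q ^ i + b ^ q ^ i := by
    intro a b i
    have hqi : q ^ i = p ^ (s * i) := by rw [hq, ← pow_mul]
    rw [hqi]
    exact add_pow_char_pow a b p (s * i)
  have hψ0 : ∀ i, (ψ i).coeff 0 = θ := fun i => (hdrin i).2.1
  have hFup := upper_zero_of_centralizes hlow hdiag hnoniso hF
  have hGup := upper_zero_of_centralizes hlow hdiag hnoniso hG
  have e1 : twMatMul q (twMatMul q F G) Υ = twMatMul q Υ (twMatMul q F G) := by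
    rw [twMatMul_assoc hq0 hfr, hG, ← twMatMul_assoc hq0 hfr, hF, twMatMul_assoc hq0 hfr]
  have e2 : twMatMul q (twMatMul q G F) Υ = twMatMul q Υ (twMatMul q G F) := by
    rw [twMatMul_assoc hq0 hfr, hF, ← twMatMul_assoc hq0 hfr, hG, twMatMul_assoc hq0 hfr]
  have hcent : twMatMul q (twMatMul q F G - twMatMul q G F) Υ
      = twMatMul q Υ (twMatMul q F G - twMatMul q G F) := by
    rw [twMatMul_sub_left, twMatMul_sub_right hq0 hfr, e1, e2]
  have key : ∀ (A B : Matrix (Fin n) (Fin n) (Polynomial K)) (k : Fin n),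
      (∀ i j : Fin n, i < j → A i j = 0) → (∀ i j : Fin n, i < j → B i j = 0) →
      (twMatMul q A B k k).coeff 0 = (A k k).coeff 0 * (B k k).coeff 0 := by
    intro A B k hA hB
    have hs' : (∑ j, (twMul q (A k j) (B j k)).coeff 0)
        = (twMul q (A k k) (B k k)).coeff 0 := by
      refine Finset.sum_eq_single k (fun j _ hjk => ?_)
        (fun hk => absurd (Finset.mem_univ k) hk)
      rcases lt_or_gt_of_ne hjk with h | h
      · rw [hB j k h, twMul_zero_right, Polynomial.coeff_zero]
      · rw [hA k j h, twMul_zero_left, Polynomial.coeff_zero]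
    rw [twMatMul_apply, Polynomial.finset_sum_coeff, hs', coeff_twMul_zero hq0 hfr]
  have h00 : ∀ k : Fin n, ((twMatMul q F G - twMatMul q G F) k k).coeff 0 = 0 := by
    intro k
    rw [Matrix.sub_apply, Polynomial.coeff_sub, key F G k hFup hGup, key G F k hGup hFup,
      mul_comm, sub_self]
  have hzero := eq_zero_of_centralizes p s hq2 hfr hθ hlow hdiag hψ0 hnoniso hcent h00
  exact sub_eq_zero.mp hzero
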